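/- Let S be a bounded operator on a complex Hilbert space H satisfying ‖S²X + XS²‖ = 2‖SXS‖ for all bounded operators X on H, with S² ≠ 0 and ‖S‖ = 1. Then S is bounded below: ‖Sx‖ ≥ (1/3)‖x‖ for all x ∈ H. -/

import Mathlib

open ContinuousLinearMap

theorem bounded_below_of_norm_eq (H : Type*) [NormedAddCommGroup H]
    [InnerProductSpace ℂ H] [CompleteSpace H] (S : H →L[ℂ] H)
    (hnorm : ‖S‖ = 1) (hS2 : S ^ 2 ≠ 0)
    (heq : ∀ X : H →L[ℂ] H, ‖S ^ 2 * X + X * S ^ 2‖ = 2 * ‖S * X * S‖) :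
    ∀ x : H, ‖S x‖ ≥ (1 / 3) * ‖x‖ := by
  set T := S ^ 2 with hT
  have hTapp : ∀ y : H, T y = S (S y) := by
    intro y; rw [hT, sq]; rfl
  have hS1 : ∀ y : H, ‖S y‖ ≤ ‖y‖ := by
    intro y
    calc ‖S y‖ ≤ ‖S‖ * ‖y‖ := S.le_opNorm y
      _ = ‖y‖ := by rw [hnorm, one_mul]
  -- norms of rank-one-type operators
  have hXnorm : ∀ v u : H, ‖(innerSL ℂ v).smulRight u‖ ≤ ‖v‖ * ‖u‖ := by
    intro v u
    apply opNorm_le_bound _ (by positivity)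
    intro w
    rw [smulRight_apply, norm_smul, innerSL_apply_apply]
    calc ‖(inner ℂ v w : ℂ)‖ * ‖u‖ ≤ (‖v‖ * ‖w‖) * ‖u‖ := by
          gcongr; exact norm_inner_le_norm _ _
      _ = ‖v‖ * ‖u‖ * ‖w‖ := by ring
  -- key inequality 1 : ‖S z‖ * ‖S u‖ ≤ ‖T‖ * (‖u‖ * ‖z‖)
  have key1 : ∀ u z : H, ‖S z‖ * ‖S u‖ ≤ ‖T‖ * (‖u‖ * ‖z‖) := by
    intro u z
    set X : H →L[ℂ] H := (innerSL ℂ (S z)).smulRight u with hX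
    have hSXS : ‖S * X * S‖ ≤ ‖T‖ * (‖S z‖ * ‖u‖) := by
      have h1 : ‖T * X + X * T‖ ≤ 2 * (‖T‖ * (‖S z‖ * ‖u‖)) := by
        calc ‖T * X + X * T‖ ≤ ‖T * X‖ + ‖X * T‖ := norm_add_le _ _
          _ ≤ ‖T‖ * ‖X‖ + ‖X‖ * ‖T‖ := by
              gcongr <;> exact norm_mul_le _ _
          _ ≤ ‖T‖ * (‖S z‖ * ‖u‖) + (‖S z‖ * ‖u‖) * ‖T‖ := by
              gcongr <;> [exact hXnorm _ _; exact hXnorm _ _]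
          _ = 2 * (‖T‖ * (‖S z‖ * ‖u‖)) := by ring
      have h2 := heq X
      linarith
    have h3 : (S * X * S) z = (inner ℂ (S z) (S z) : ℂ) • S u := by
      simp [hX, mul_apply, smulRight_apply, innerSL_apply_apply]
    have h4 : ‖(S * X * S) z‖ = ‖S z‖ ^ 2 * ‖S u‖ := by
      rw [h3, norm_smul, inner_self_eq_norm_sq_to_K]
      norm_num
    have h5 : ‖S z‖ ^ 2 * ‖S u‖ ≤ ‖T‖ * (‖S z‖ * ‖u‖) * ‖z‖ := by
      calc ‖S z‖ ^ 2 * ‖S u‖ = ‖(S * X * S) z‖ := h4.symm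
        _ ≤ ‖S * X * S‖ * ‖z‖ := le_opNorm _ _
        _ ≤ ‖T‖ * (‖S z‖ * ‖u‖) * ‖z‖ := by gcongr
    rcases eq_or_lt_of_le (norm_nonneg (S z)) with h0 | h0
    · rw [← h0, zero_mul]; positivity
    · nlinarith [norm_nonneg (S u), norm_nonneg (S z)]
  -- ‖T‖ ≥ 1
  have hT1 : (1 : ℝ) ≤ ‖T‖ := by
    by_contra hcon
    push_neg at hcon
    set c : ℝ := (1 + Real.sqrt ‖T‖) / 2 with hc
    have hs0 : 0 ≤ Real.sqrt ‖T‖ := Real.sqrt_nonneg _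
    have hs1 : Real.sqrt ‖T‖ < 1 := by
      rw [show (1:ℝ) = Real.sqrt 1 by simp]
      exact Real.sqrt_lt_sqrt (norm_nonneg _) hcon
    have hc1 : c < 1 := by rw [hc]; linarith
    have hcs : Real.sqrt ‖T‖ < c := by rw [hc]; linarith
    have hc0 : 0 ≤ c := by rw [hc]; linarith
    have hc2 : ‖T‖ < c ^ 2 := by
      have := Real.sq_sqrt (norm_nonneg T)
      nlinarith
    have hcS : c < ‖S‖ := by rw [hnorm]; exact hc1
    obtain ⟨u, hu1, hu2⟩ := S.exists_lt_apply_of_lt_opNorm hcS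
    obtain ⟨z, hz1, hz2⟩ := S.exists_lt_apply_of_lt_opNorm hcS
    have huz : ‖u‖ * ‖z‖ ≤ 1 := by nlinarith [norm_nonneg u, norm_nonneg z]
    have h9 : ‖T‖ * (‖u‖ * ‖z‖) ≤ ‖T‖ := mul_le_of_le_one_right (norm_nonneg T) huz
    have hA : c * c < ‖S z‖ * ‖S u‖ := mul_lt_mul'' hz2 hu2 hc0 hc0
    have := key1 u z
    nlinarith
  -- key inequality 2 : ‖T z‖ * ‖x‖ ≤ 3 * (‖S x‖ * ‖z‖)
  have key2 : ∀ x z : H, ‖T z‖ * ‖x‖ ≤ 3 * (‖S x‖ * ‖z‖) := by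
    intro x z
    set X : H →L[ℂ] H := (innerSL ℂ (T z)).smulRight x with hX
    have hSXS : ‖S * X * S‖ ≤ ‖T z‖ * ‖S x‖ := by
      apply opNorm_le_bound _ (by positivity)
      intro w
      have h3 : (S * X * S) w = (inner ℂ (T z) (S w) : ℂ) • S x := by
        simp [hX, mul_apply, smulRight_apply, innerSL_apply_apply]
      rw [h3, norm_smul]
      calc ‖(inner ℂ (T z) (S w) : ℂ)‖ * ‖S x‖ ≤ (‖T z‖ * ‖S w‖) * ‖S x‖ := by
            gcongr; exact norm_inner_le_norm _ _
        _ ≤ (‖T z‖ * ‖w‖) * ‖S x‖ := by gcongr; exact hS1 w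
        _ = ‖T z‖ * ‖S x‖ * ‖w‖ := by ring
    have hEval : (T * X + X * T) z
        = (inner ℂ (T z) (z) : ℂ) • T x + (inner ℂ (T z) (T z) : ℂ) • x := by
      simp [hX, mul_apply, smulRight_apply, innerSL_apply_apply, ContinuousLinearMap.add_apply]
    have hTx : ‖T x‖ ≤ ‖S x‖ := by rw [hTapp]; exact hS1 _
    have hup : ‖(T * X + X * T) z‖ ≤ 2 * (‖T z‖ * ‖S x‖) * ‖z‖ := by
      calc ‖(T * X + X * T) z‖ ≤ ‖T * X + X * T‖ * ‖z‖ := le_opNorm _ _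
        _ = 2 * ‖S * X * S‖ * ‖z‖ := by rw [heq X]
        _ ≤ 2 * (‖T z‖ * ‖S x‖) * ‖z‖ := by gcongr
    have hlow : ‖T z‖ ^ 2 * ‖x‖ ≤ ‖(T * X + X * T) z‖ + ‖T z‖ * ‖z‖ * ‖S x‖ := by
      have h6 : ‖(inner ℂ (T z) (T z) : ℂ) • x‖ = ‖T z‖ ^ 2 * ‖x‖ := by
        rw [norm_smul, inner_self_eq_norm_sq_to_K]; norm_num
      have h7 : ‖(inner ℂ (T z) (z) : ℂ) • T x‖ ≤ ‖T z‖ * ‖z‖ * ‖S x‖ := by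
        rw [norm_smul]
        calc ‖(inner ℂ (T z) (z) : ℂ)‖ * ‖T x‖ ≤ (‖T z‖ * ‖z‖) * ‖S x‖ := by
              gcongr; exact norm_inner_le_norm _ _
          _ = ‖T z‖ * ‖z‖ * ‖S x‖ := by ring
      calc ‖T z‖ ^ 2 * ‖x‖ = ‖(inner ℂ (T z) (T z) : ℂ) • x‖ := h6.symm
        _ ≤ ‖(T * X + X * T) z‖ + ‖(inner ℂ (T z) (z) : ℂ) • T x‖ := by
            have h9 : (inner ℂ (T z) (T z) : ℂ) • x
                = ((T * X + X * T) z) - (inner ℂ (T z) (z) : ℂ) • T x := by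
              rw [hEval]; abel
            rw [h9]
            exact norm_sub_le _ _
        _ ≤ ‖(T * X + X * T) z‖ + ‖T z‖ * ‖z‖ * ‖S x‖ := by gcongr
    have h8 : ‖T z‖ ^ 2 * ‖x‖ ≤ 3 * (‖T z‖ * (‖S x‖ * ‖z‖)) := by nlinarith
    rcases eq_or_lt_of_le (norm_nonneg (T z)) with h0 | h0
    · rw [← h0, zero_mul]; positivity
    · nlinarith
  -- conclusion
  intro x
  rcases eq_or_ne x 0 with rfl | hx
  · simp
  have hxpos : (0:ℝ) < ‖x‖ := norm_pos_iff.mpr hx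
  have hTle : ‖T‖ ≤ 3 * ‖S x‖ / ‖x‖ := by
    apply opNorm_le_bound _ (by positivity)
    intro z
    rw [div_mul_eq_mul_div, le_div_iff₀ hxpos]
    calc ‖T z‖ * ‖x‖ ≤ 3 * (‖S x‖ * ‖z‖) := key2 x z
      _ = 3 * ‖S x‖ * ‖z‖ := by ring
  have : 1 ≤ 3 * ‖S x‖ / ‖x‖ := le_trans hT1 hTle
  rw [le_div_iff₀ hxpos] at this
  linarith
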